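/- Let M be the numerical monoid generated by m_1 < ... < m_t, and let m : M → ℕ send each element a to its minimum factorization length (the minimum of z_1 + ... + z_t over all (z_1,...,z_t) ∈ ℕ^t with z_1 m_1 + ... + z_t m_t = a). Then for all a ∈ M with a > m_{t-1} m_t, we have m(a + m_t) = m(a) + 1. -/

import Mathlib

open Finset

lemma aux_sum (n : ℕ) (m : Fin n → ℕ) (l : List (Fin n)) :
    (l.map m).sum = ∑ i, l.count i * m i := by
  induction l with
  | nil => simp
  | cons a l ih =>
      simp only [List.map_cons, List.sum_cons, List.count_cons, ih, add_mul,
        Finset.sum_add_distrib]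
      simp [Finset.sum_ite_eq', add_comm]

lemma aux_len (n : ℕ) (l : List (Fin n)) : l.length = ∑ i, l.count i := by
  induction l with
  | nil => simp
  | cons a l ih =>
      simp only [List.length_cons, List.count_cons, ih, Finset.sum_add_distrib]
      simp [Finset.sum_ite_eq']

lemma aux_exists (n : ℕ) (z : Fin n → ℕ) : ∃ l : List (Fin n), ∀ i, l.count i = z i := by
  refine ⟨(∑ i, Multiset.replicate (z i) i).toList, fun i => ?_⟩
  rw [← Multiset.coe_count, (∑ j, Multiset.replicate (z j) j).coe_toList,
    Multiset.count_sum']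
  simp [Multiset.count_replicate]

lemma aux_set (n : ℕ) (m : Fin n → ℕ) (b : ℕ) :
    {ℓ | ∃ z : Fin n → ℕ, (∑ i, z i * m i = b) ∧ ∑ i, z i = ℓ} =
    {ℓ | ∃ l : List (Fin n), ((l.map m).sum = b) ∧ l.length = ℓ} := by
  ext ℓ
  constructor
  · rintro ⟨z, hz, hl⟩
    obtain ⟨l, hcount⟩ := aux_exists n z
    exact ⟨l, by rw [aux_sum]; simp [hcount, hz], by rw [aux_len]; simp [hcount, hl]⟩
  · rintro ⟨l, hz, hl⟩
    exact ⟨fun i => l.count i, by rw [← aux_sum]; exact hz, by rw [← aux_len]; exact hl⟩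

theorem stmt0 (t : ℕ) (m : Fin (t + 2) → ℕ) (hmono : StrictMono m) (hpos : 0 < m 0)
    (a : ℕ) (ha : ∃ z : Fin (t + 2) → ℕ, ∑ i, z i * m i = a)
    (hbig : m (Fin.castSucc (Fin.last t)) * m (Fin.last (t + 1)) < a) :
    sInf {ℓ | ∃ z : Fin (t + 2) → ℕ, (∑ i, z i * m i = a + m (Fin.last (t + 1))) ∧ ∑ i, z i = ℓ}
      = sInf {ℓ | ∃ z : Fin (t + 2) → ℕ, (∑ i, z i * m i = a) ∧ ∑ i, z i = ℓ} + 1 := by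
  set s : Fin (t + 2) := Fin.castSucc (Fin.last t) with hs
  set T : Fin (t + 2) := Fin.last (t + 1) with hT
  rw [aux_set, aux_set]
  set A : Set ℕ := {ℓ | ∃ l : List (Fin (t + 2)), ((l.map m).sum = a) ∧ l.length = ℓ} with hAdef
  set B : Set ℕ := {ℓ | ∃ l : List (Fin (t + 2)),
      ((l.map m).sum = a + m T) ∧ l.length = ℓ} with hBdef
  have hsT : m s < m T := hmono (by simp [hs, hT, Fin.lt_def])
  have hs0 : 0 < m s := lt_of_lt_of_le hpos (hmono.monotone (Fin.zero_le s))
  have hT0 : 0 < m T := hs0.trans hsT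
  -- nonemptiness
  have hAne : A.Nonempty := by
    obtain ⟨z, hz⟩ := ha
    obtain ⟨l, hc⟩ := aux_exists _ z
    exact ⟨l.length, l, by rw [aux_sum]; simpa [hc] using hz, rfl⟩
  obtain ⟨ℓA₀, lA₀, hlA₀, rfl⟩ := hAne
  have hAne : A.Nonempty := ⟨_, lA₀, hlA₀, rfl⟩
  have hBne : B.Nonempty := ⟨_, T :: lA₀, by simp [hlA₀, add_comm], rfl⟩
  -- upper bound : sInf B ≤ sInf A + 1
  have hub : sInf B ≤ sInf A + 1 := by
    obtain ⟨lA, hsum, hlen⟩ := Nat.sInf_mem hAne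
    exact Nat.sInf_le ⟨T :: lA, by simp [hsum, add_comm], by simp [hlen]⟩
  -- lower bound
  obtain ⟨lB, hBsum, hBlen⟩ := Nat.sInf_mem hBne
  have hTinB : T ∈ lB := by
    by_contra hTnot
    -- every element ≤ s
    have hle : ∀ x ∈ lB.map m, x ≤ m s := by
      rintro x hx
      obtain ⟨i, hi, rfl⟩ := List.mem_map.mp hx
      have hiT : i ≠ T := fun h => hTnot (h ▸ hi)
      have : i ≤ s := by
        rcases Fin.lt_or_lt_of_ne hiT with h | h
        · exact Fin.le_castSucc_iff.mpr (by simpa [hT] using h)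
        · exact absurd h (by simp [hT, Fin.le_last, not_lt])
      exact hmono.monotone this
    have hbound : a + m T ≤ lB.length * m s := by
      rw [← hBsum]
      calc (lB.map m).sum ≤ (lB.map m).length • m s := List.sum_le_card_nsmul _ _ hle
        _ = lB.length * m s := by simp [smul_eq_mul]
    have hlenbig : m T < lB.length := by
      by_contra h
      push_neg at h
      have h2 : a + m T ≤ m T * m s := le_trans hbound (Nat.mul_le_mul_right _ h)
      rw [mul_comm] at h2
      omega
    -- pigeonhole on prefix sums mod m T
    have key : ∀ j k : Fin (m T + 1), j < k →
        ((lB.take j.val).map m).sum % m T = ((lB.take k.val).map m).sum % m T → False := by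
      intro j k hjk heq
      have hkℓ : k.val ≤ lB.length := le_trans (Nat.lt_succ_iff.mp k.isLt) hlenbig.le
      set bl : List (Fin (t + 2)) := (lB.take k.val).drop j.val with hbl
      have hjkv : j.val < k.val := hjk
      have hsplit : lB.take k.val = lB.take j.val ++ bl := by
        rw [hbl]
        conv_lhs => rw [← List.take_append_drop j.val (lB.take k.val)]
        rw [List.take_take, Nat.min_eq_left hjkv.le]
      have hbllen : bl.length = k.val - j.val := by
        simp [hbl, Nat.min_eq_left hkℓ]
      have hblpos : 0 < bl.length := by omega
      have hSsplit : ((lB.take k.val).map m).sum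
          = ((lB.take j.val).map m).sum + (bl.map m).sum := by
        rw [hsplit]; simp
      -- divisibility
      have hdvd : m T ∣ (bl.map m).sum := by
        have : ((lB.take j.val).map m).sum + (bl.map m).sum
            ≡ ((lB.take j.val).map m).sum + 0 [MOD m T] := by
          rw [add_zero, ← hSsplit]; exact heq.symm
        have := (Nat.ModEq.add_left_cancel' _ this)
        exact (Nat.modEq_zero_iff_dvd).mp this
      -- bounds on block sum
      have hblsub : bl.Sublist lB :=
        (List.drop_sublist _ _).trans (List.take_sublist _ _)
      have hupper : (bl.map m).sum ≤ bl.length * m s := by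
        calc (bl.map m).sum ≤ (bl.map m).length • m s :=
              List.sum_le_card_nsmul _ _ (fun x hx =>
                hle x (List.Sublist.mem hx ((hblsub.map m))))
          _ = bl.length * m s := by simp [smul_eq_mul]
      have hlower : 0 < (bl.map m).sum := by
        rcases List.exists_mem_of_length_pos (l := bl) hblpos with ⟨x, hx⟩
        have : 0 < m x := lt_of_lt_of_le hpos (hmono.monotone (Fin.zero_le x))
        calc 0 < m x := this
          _ ≤ (bl.map m).sum := List.single_le_sum (by simp) _ (List.mem_map_of_mem (f := m) hx)
      obtain ⟨c, hc⟩ := hdvd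
      have hc1 : 1 ≤ c := by
        rcases Nat.eq_zero_or_pos c with h | h
        · simp [h] at hc; omega
        · exact h
      have hclt : c < bl.length := by
        have : m T * c < m T * bl.length := by
          calc m T * c = (bl.map m).sum := hc.symm
            _ ≤ bl.length * m s := hupper
            _ < bl.length * m T := mul_lt_mul_of_pos_left hsT hblpos
            _ = m T * bl.length := mul_comm _ _
        exact Nat.lt_of_mul_lt_mul_left this
      -- the shorter factorization
      set l' : List (Fin (t + 2)) := lB.take j.val ++ List.replicate c T ++ lB.drop k.val
        with hl'
      have hfull : lB = lB.take k.val ++ lB.drop k.val := (List.take_append_drop _ _).symm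
      have hl'sum : (l'.map m).sum = a + m T := by
        rw [← hBsum]
        conv_rhs => rw [hfull]
        simp only [hl', List.map_append, List.sum_append, List.map_replicate,
          List.sum_replicate, smul_eq_mul]
        rw [hSsplit, hc]
        ring
      have hl'len : l'.length < lB.length := by
        simp only [hl', List.length_append, List.length_take, List.length_replicate,
          List.length_drop]
        have : j.val < k.val := hjk
        rw [Nat.min_eq_left (le_trans this.le hkℓ)]
        omega
      have : sInf B ≤ l'.length := Nat.sInf_le ⟨l', hl'sum, rfl⟩
      omega
    obtain ⟨j', k', hne, heq⟩ := Fintype.exists_ne_map_eq_of_card_lt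
      (fun k : Fin (m T + 1) => (⟨((lB.take k.val).map m).sum % m T, Nat.mod_lt _ hT0⟩ :
        Fin (m T))) (by simp)
    rcases Ne.lt_or_gt hne with hjk | hjk
    · exact key j' k' hjk (by simpa [Fin.mk.injEq] using congrArg Fin.val heq)
    · exact key k' j' hjk (by simpa [Fin.mk.injEq] using congrArg Fin.val heq.symm)
  -- use membership of T
  have hperm : lB.Perm (T :: lB.erase T) := List.perm_cons_erase hTinB
  have hsum' : ((lB.erase T).map m).sum = a := by
    have := (hperm.map m).sum_eq
    rw [hBsum] at this
    simp at this
    omega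
  have hlen' : (lB.erase T).length + 1 = lB.length := by
    have := hperm.length_eq
    simp at this
    omega
  have hlb : sInf A + 1 ≤ sInf B := by
    have : sInf A ≤ (lB.erase T).length := Nat.sInf_le ⟨_, hsum', rfl⟩
    omega
  omega
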